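/- Let K be a field, I an ideal of the multivariate polynomial ring K[x_1,…,x_n], and G a finite subset of I such that for every nonzero f ∈ I, the leading monomial of f (with respect to a fixed monomial order) is divisible by the leading monomial of some g ∈ G. Then G generates I. -/

import Mathlib

open MvPolynomial

/-- The leading exponent (exponent vector of the leading monomial) of a
multivariate polynomial with respect to a monomial order. -/
noncomputable def leadExp {n : ℕ} (m : MonomialOrder (Fin n)) {K : Type*} [Field K]
    (f : MvPolynomial (Fin n) K) : Fin n →₀ ℕ :=
  m.toSyn.symm (f.support.sup fun c => m.toSyn c)

lemma le_leadExp {n : ℕ} (m : MonomialOrder (Fin n)) {K : Type*} [Field K]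
    {f : MvPolynomial (Fin n) K} {c : Fin n →₀ ℕ} (hc : c ∈ f.support) :
    m.toSyn c ≤ m.toSyn (leadExp m f) := by
  rw [leadExp, AddEquiv.apply_symm_apply]
  exact Finset.le_sup hc

lemma leadExp_mem {n : ℕ} (m : MonomialOrder (Fin n)) {K : Type*} [Field K]
    {f : MvPolynomial (Fin n) K} (hf : f ≠ 0) : leadExp m f ∈ f.support := by
  obtain ⟨c, hc, he⟩ := Finset.exists_mem_eq_sup f.support
    (MvPolynomial.support_nonempty.mpr hf) (fun c => m.toSyn c)
  rw [leadExp, he, AddEquiv.symm_apply_apply]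
  exact hc

lemma coeff_eq_zero_of_lt {n : ℕ} (m : MonomialOrder (Fin n)) {K : Type*} [Field K]
    {f : MvPolynomial (Fin n) K} {c : Fin n →₀ ℕ}
    (hc : m.toSyn (leadExp m f) < m.toSyn c) : MvPolynomial.coeff c f = 0 := by
  by_contra h
  exact absurd (le_leadExp m (MvPolynomial.mem_support_iff.mpr h)) (not_le.mpr hc)

/-- A Gröbner basis of an ideal generates the ideal. -/
theorem stmt_3 {n : ℕ} (m : MonomialOrder (Fin n)) {K : Type*} [Field K]
    (I : Ideal (MvPolynomial (Fin n) K)) (G : Finset (MvPolynomial (Fin n) K))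
    (hGI : (G : Set (MvPolynomial (Fin n) K)) ⊆ I)
    (hGB : ∀ f ∈ I, f ≠ 0 → ∃ g ∈ G, g ≠ 0 ∧ leadExp m g ≤ leadExp m f) :
    Ideal.span (G : Set (MvPolynomial (Fin n) K)) = I := by
  apply le_antisymm
  · rw [Ideal.span_le]; exact hGI
  · intro f hf
    have key : ∀ s : m.syn, ∀ f ∈ I, m.toSyn (leadExp m f) ≤ s →
        f ∈ Ideal.span (G : Set (MvPolynomial (Fin n) K)) := by
      intro s
      induction s using WellFoundedLT.induction with
      | _ s IH =>
        intro f hfI hfs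
        by_cases hf0 : f = 0
        · simp [hf0]
        obtain ⟨g, hgG, hg0, hgle⟩ := hGB f hfI hf0
        set lf := leadExp m f with hlf
        set lg := leadExp m g with hlg
        have hlcg : MvPolynomial.coeff lg g ≠ 0 :=
          MvPolynomial.mem_support_iff.mp (leadExp_mem m hg0)
        set q : MvPolynomial (Fin n) K :=
          monomial (lf - lg) (MvPolynomial.coeff lf f / MvPolynomial.coeff lg g) with hq
        have hdlg : lf - lg + lg = lf := tsub_add_cancel_of_le hgle
        -- support of q * g is bounded by lf in the monomial order
        have hsupp : ∀ c, m.toSyn lf < m.toSyn c → MvPolynomial.coeff c (q * g) = 0 := by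
          intro c hc
          rw [hq, MvPolynomial.coeff_monomial_mul']
          split_ifs with h
          · have : MvPolynomial.coeff (c - (lf - lg)) g = 0 := by
              apply coeff_eq_zero_of_lt m
              by_contra hcon
              push_neg at hcon
              have h1 : m.toSyn c = m.toSyn (c - (lf - lg)) + m.toSyn (lf - lg) := by
                rw [← map_add, tsub_add_cancel_of_le h]
              have h2 : m.toSyn lf = m.toSyn lg + m.toSyn (lf - lg) := by
                rw [← map_add, add_comm, hdlg]
              have := add_le_add hcon (le_refl (m.toSyn (lf - lg)))
              rw [← h1, ← h2] at this
              exact absurd this (not_le.mpr hc)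
            simp [this]
          · rfl
        have hcoefflf : MvPolynomial.coeff lf (q * g) = MvPolynomial.coeff lf f := by
          rw [hq, MvPolynomial.coeff_monomial_mul', if_pos (by
            calc lf - lg ≤ lf - lg + lg := le_add_of_nonneg_right zero_le
            _ = lf := hdlg)]
          have : lf - (lf - lg) = lg := by
            rw [tsub_tsub_cancel_of_le hgle]
          rw [this, div_mul_cancel₀ _ hlcg]
        set h := f - q * g with hh
        have hhI : h ∈ I := I.sub_mem hfI (I.mul_mem_left q (hGI hgG))
        have hqg_span : q * g ∈ Ideal.span (G : Set (MvPolynomial (Fin n) K)) :=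
          Ideal.mul_mem_left _ q (Ideal.subset_span hgG)
        by_cases hh0 : h = 0
        · have : f = q * g := by rw [← sub_eq_zero]; exact hh0
          rw [this]; exact hqg_span
        · have hlt : m.toSyn (leadExp m h) < m.toSyn lf := by
            have hle : m.toSyn (leadExp m h) ≤ m.toSyn lf := by
              by_contra hcon
              push_neg at hcon
              have h1 : MvPolynomial.coeff (leadExp m h) h = 0 := by
                rw [hh, MvPolynomial.coeff_sub, coeff_eq_zero_of_lt m hcon,
                  hsupp _ hcon, sub_zero]
              exact MvPolynomial.mem_support_iff.mp (leadExp_mem m hh0) h1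
            rcases lt_or_eq_of_le hle with hlt | heq
            · exact hlt
            · exfalso
              have hleh : leadExp m h = lf := m.toSyn.injective heq
              have : MvPolynomial.coeff lf h = 0 := by
                rw [hh, MvPolynomial.coeff_sub, hcoefflf, sub_self]
              rw [← hleh] at this
              exact MvPolynomial.mem_support_iff.mp (leadExp_mem m hh0) this
          have hhspan := IH (m.toSyn (leadExp m h)) (lt_of_lt_of_le hlt hfs) h hhI le_rfl
          have : f = h + q * g := by rw [hh]; ring
          rw [this]
          exact Ideal.add_mem _ hhspan hqg_span
    exact key (m.toSyn (leadExp m f)) f hf le_rfl
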